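/- A nonnegative matrix H ∈ R_+^{n×r} is separable (there exists an index set K of size r such that H(K,:) is a diagonal matrix with positive diagonal) if and only if the conic hull of its rows equals R_+^r, equivalently if and only if H satisfies the 1-SSC (C_1 ⊆ cone(H^T)). -/

import Mathlib

open scoped BigOperators

/-- The conic hull of the rows of a matrix `H ∈ ℝ^{n×r}`. -/
def rowCone {n r : ℕ} (H : Matrix (Fin n) (Fin r) ℝ) : Set (EuclideanSpace ℝ (Fin r)) :=
  {x | ∃ lam : Fin n → ℝ, (∀ i, 0 ≤ lam i) ∧
    x = ∑ i, lam i • ((WithLp.equiv 2 (Fin r → ℝ)).symm fun j => H i j)}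

/-- `H` is separable: there is an index set `K` of size `r` (given by an injective map
`f : Fin r → Fin n`) such that `H(K,:)` is diagonal with positive diagonal. -/
def Separable {n r : ℕ} (H : Matrix (Fin n) (Fin r) ℝ) : Prop :=
  ∃ f : Fin r → Fin n, Function.Injective f ∧
    (∀ i, 0 < H (f i) i) ∧ ∀ i j, i ≠ j → H (f i) j = 0

lemma sum_coord {n r : ℕ} (H : Matrix (Fin n) (Fin r) ℝ) (lam : Fin n → ℝ) (k : Fin r) :
    (∑ i, lam i • ((WithLp.equiv 2 (Fin r → ℝ)).symm fun j => H i j) : EuclideanSpace ℝ (Fin r)) k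
      = ∑ i, lam i * H i k := by
  have h := map_sum (EuclideanSpace.proj k (𝕜 := ℝ))
    (fun i => lam i • ((WithLp.equiv 2 (Fin r → ℝ)).symm fun j => H i j)) Finset.univ
  simp only [PiLp.proj_apply, map_smul, smul_eq_mul, WithLp.equiv_symm_apply, PiLp.toLp_apply] at h
  exact h

/-- Key lemma: separability is equivalent to the nonnegative orthant being in the row cone. -/
lemma sep_iff_orthant {n r : ℕ} (H : Matrix (Fin n) (Fin r) ℝ) (hH : ∀ i j, 0 ≤ H i j) :
    Separable H ↔ ∀ x : EuclideanSpace ℝ (Fin r), (∀ j, 0 ≤ x j) → x ∈ rowCone H := by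
  constructor
  · rintro ⟨f, hf, hdiag, hoff⟩ x hx
    refine ⟨fun i => ∑ j, if f j = i then x j / H (f j) j else 0, ?_, ?_⟩
    · intro i
      exact Finset.sum_nonneg fun j _ => by
        split
        · exact div_nonneg (hx j) (hdiag j).le
        · exact le_rfl
    · ext k
      rw [sum_coord]
      have : ∀ i : Fin n, (∑ j, if f j = i then x j / H (f j) j else 0) * H i k
          = ∑ j, if f j = i then (x j / H (f j) j) * H i k else 0 := by
        intro i
        rw [Finset.sum_mul]
        congr 1; funext j; split <;> simp
      simp_rw [this]
      rw [Finset.sum_comm]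
      have hterm : ∀ j : Fin r,
          (∑ i, if f j = i then (x j / H (f j) j) * H i k else 0)
            = (x j / H (f j) j) * H (f j) k := by
        intro j
        rw [Finset.sum_eq_single (f j)]
        · simp
        · intro i _ hi; simp [Ne.symm hi]
        · simp
      simp_rw [hterm]
      rw [Finset.sum_eq_single k]
      · rw [div_mul_cancel₀ _ (hdiag k).ne']
      · intro j _ hj
        rw [hoff j k hj, mul_zero]
      · simp
  · intro hcone
    -- for each j, pick a row which is a positive multiple of e_j
    have key : ∀ j : Fin r, ∃ i : Fin n, 0 < H i j ∧ ∀ k, k ≠ j → H i k = 0 := by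
      intro j
      obtain ⟨lam, hlam, heq⟩ := hcone (EuclideanSpace.single j 1)
        (fun k => by rw [EuclideanSpace.single_apply]; split <;> norm_num)
      have hcoord : ∀ k, (EuclideanSpace.single j (1:ℝ)) k = ∑ i, lam i * H i k := by
        intro k; rw [heq, sum_coord]
      have h1 : (1:ℝ) = ∑ i, lam i * H i j := by
        have := hcoord j; rwa [EuclideanSpace.single_apply, if_pos rfl] at this
      obtain ⟨i, _, hi⟩ := Finset.exists_ne_zero_of_sum_ne_zero (by rw [← h1]; norm_num :
        ∑ i, lam i * H i j ≠ 0)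
      have hli : 0 < lam i := by
        rcases lt_or_eq_of_le (hlam i) with h | h
        · exact h
        · exact absurd (by rw [← h, zero_mul]) hi
      have hHij : 0 < H i j := by
        rcases lt_or_eq_of_le (hH i j) with h | h
        · exact h
        · exact absurd (by rw [← h, mul_zero]) hi
      refine ⟨i, hHij, fun k hk => ?_⟩
      have h0 : ∑ i', lam i' * H i' k = 0 := by
        have := hcoord k
        rw [EuclideanSpace.single_apply, if_neg hk] at this
        exact this.symm
      have := (Finset.sum_eq_zero_iff_of_nonneg
        (fun i' _ => mul_nonneg (hlam i') (hH i' k))).mp h0 i (Finset.mem_univ i)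
      have := mul_eq_zero.mp this
      rcases this with h | h
      · exact absurd h hli.ne'
      · exact h
    choose g hg1 hg2 using key
    refine ⟨g, fun j j' hjj' => ?_, hg1, fun j k hjk => hg2 j k (Ne.symm hjk)⟩
    by_contra hne
    have h0 : H (g j') j = 0 := hg2 j' j hne
    have h1 : 0 < H (g j) j := hg1 j
    rw [hjj'] at h1
    exact absurd h0 h1.ne'

lemma rowCone_subset_orthant {n r : ℕ} (H : Matrix (Fin n) (Fin r) ℝ) (hH : ∀ i j, 0 ≤ H i j) :
    rowCone H ⊆ {x : EuclideanSpace ℝ (Fin r) | ∀ j, 0 ≤ x j} := by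
  rintro x ⟨lam, hlam, rfl⟩ j
  show (0:ℝ) ≤ _
  rw [sum_coord]
  exact Finset.sum_nonneg fun i _ => mul_nonneg (hlam i) (hH i j)

/-- A nonnegative matrix `H` is separable iff the conic hull of its rows is all of
`ℝ_+^r`, equivalently iff `H` satisfies the 1-SSC, `C_1 ⊆ cone(H^T)`. -/
theorem stmt7 (n r : ℕ) (H : Matrix (Fin n) (Fin r) ℝ) (hH : ∀ i j, 0 ≤ H i j) :
    (Separable H ↔ rowCone H = {x : EuclideanSpace ℝ (Fin r) | ∀ j, 0 ≤ x j}) ∧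
    (Separable H ↔
      {x : EuclideanSpace ℝ (Fin r) | (∀ j, 0 ≤ x j) ∧ ‖x‖ ≤ ∑ j, x j} ⊆ rowCone H) := by
  have hnorm : ∀ x : EuclideanSpace ℝ (Fin r), (∀ j, 0 ≤ x j) → ‖x‖ ≤ ∑ j, x j := by
    intro x hx
    rw [EuclideanSpace.norm_eq]
    have h1 : ∑ j, ‖x j‖ ^ 2 ≤ (∑ j, x j) ^ 2 := by
      calc ∑ j, ‖x j‖ ^ 2 = ∑ j, x j * x j := by
            congr 1; funext j; rw [Real.norm_eq_abs, sq_abs, sq]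
        _ ≤ ∑ j, x j * (∑ k, x k) := Finset.sum_le_sum fun j _ =>
            mul_le_mul_of_nonneg_left
              (Finset.single_le_sum (fun k _ => hx k) (Finset.mem_univ j)) (hx j)
        _ = (∑ j, x j) ^ 2 := by rw [← Finset.sum_mul, sq]
    calc Real.sqrt (∑ j, ‖x j‖ ^ 2) ≤ Real.sqrt ((∑ j, x j) ^ 2) := Real.sqrt_le_sqrt h1
      _ = ∑ j, x j := Real.sqrt_sq (Finset.sum_nonneg fun j _ => hx j)
  constructor
  · rw [sep_iff_orthant H hH]
    constructor
    · intro h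
      apply Set.Subset.antisymm (rowCone_subset_orthant H hH)
      intro x hx
      exact h x hx
    · intro h x hx
      rw [h]; exact hx
  · rw [sep_iff_orthant H hH]
    constructor
    · intro h x hx
      exact h x hx.1
    · intro h x hx
      exact h ⟨hx, hnorm x hx⟩
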